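/- Let A be a semiprime superalgebra over a commutative unital ring φ with 1/2 ∈ φ, and let L be a Lie ideal of A, i.e., a graded φ-submodule with [L,A] ⊆ L (superbracket). Then either [L,L] = 0, or L is dense in A. -/

import Mathlib

open DirectSum

/-- The sign `(−1)^{ij}` for degrees `i j : ZMod 2`. -/
def ssign (i j : ZMod 2) : ℤ := if i = 1 ∧ j = 1 then -1 else 1

variable {φ A : Type*}

section
variable [CommRing φ] [Ring A] [Algebra φ A]

/-- Superbracket `[x,y] = xy − (−1)^{ij} yx` of homogeneous elements of degrees `i`, `j`. -/
def sbr (i j : ZMod 2) (x y : A) : A := x * y - ssign i j • (y * x)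

/-- Supercircle product `x∘y = xy + (−1)^{ij} yx` of homogeneous elements of degrees `i`, `j`. -/
def scirc (i j : ZMod 2) (x y : A) : A := x * y + ssign i j • (y * x)

/-- A graded two-sided ideal of the superalgebra `A = ⨁ 𝒜 i`. -/
structure SuperIdeal (𝒜 : ZMod 2 → Submodule φ A) [GradedAlgebra 𝒜] where
  carrier : Submodule φ A
  mul_mem_left : ∀ (a x : A), x ∈ carrier → a * x ∈ carrier
  mul_mem_right : ∀ (a x : A), x ∈ carrier → x * a ∈ carrier
  graded' : ∀ (i : ZMod 2), ∀ x ∈ carrier, ((DirectSum.decompose 𝒜 x) i : A) ∈ carrier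

variable (𝒜 : ZMod 2 → Submodule φ A)

/-- A superalgebra is prime if `I⬝J = 0` forces `I = 0` or `J = 0` for graded ideals `I`, `J`. -/
def SuperPrime [GradedAlgebra 𝒜] : Prop :=
  ∀ I J : SuperIdeal 𝒜, (∀ x ∈ I.carrier, ∀ y ∈ J.carrier, x * y = 0) →
    I.carrier = ⊥ ∨ J.carrier = ⊥

/-- A superalgebra is semiprime if it has no nonzero graded ideal of square zero. -/
def SuperSemiprime [GradedAlgebra 𝒜] : Prop :=
  ∀ I : SuperIdeal 𝒜, (∀ x ∈ I.carrier, ∀ y ∈ I.carrier, x * y = 0) → I.carrier = ⊥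

/-- `Z`, the even part of the center of `A`. -/
def evenCenter : Set A := {z : A | z ∈ 𝒜 0 ∧ ∀ x : A, z * x = x * z}

/-- A subset `M` of `A` is dense if the (non-unital) subalgebra of `A` generated by `M`
contains a nonzero ideal of `A`. -/
def IsDenseIn [GradedAlgebra 𝒜] (M : Set A) : Prop :=
  ∃ J : SuperIdeal 𝒜, J.carrier ≠ ⊥ ∧
    (J.carrier : Set A) ⊆ NonUnitalAlgebra.adjoin φ M

/-- A superinvolution on the superalgebra `A`. -/
structure Superinvolution (𝒜 : ZMod 2 → Submodule φ A) where
  toFun : A →ₗ[φ] A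
  grading : ∀ (i : ZMod 2), ∀ x ∈ 𝒜 i, toFun x ∈ 𝒜 i
  invol : ∀ x : A, toFun (toFun x) = x
  mul_rev : ∀ (i j : ZMod 2), ∀ x ∈ 𝒜 i, ∀ y ∈ 𝒜 j,
    toFun (x * y) = ssign i j • (toFun y * toFun x)

/-- A Lie ideal of the Lie superalgebra `K` of skew elements of `(A,*)`: a graded
`φ`-submodule of `K` with `[U,K] ⊆ U`. -/
structure LieIdealOfSkew [GradedAlgebra 𝒜] (σ : Superinvolution 𝒜) where
  carrier : Submodule φ A
  skew : ∀ x ∈ carrier, σ.toFun x = -x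
  graded' : ∀ (i : ZMod 2), ∀ x ∈ carrier, ((DirectSum.decompose 𝒜 x) i : A) ∈ carrier
  bracket_mem : ∀ (i j : ZMod 2) (u k : A), u ∈ carrier → u ∈ 𝒜 i →
    k ∈ 𝒜 j → σ.toFun k = -k → sbr i j u k ∈ carrier

/-- The additive span of superbrackets of homogeneous elements of `S` and `T`. -/
def superBrAdd (S T : Set A) : AddSubgroup A :=
  AddSubgroup.closure
    {z : A | ∃ (i j : ZMod 2) (x y : A), x ∈ S ∧ x ∈ 𝒜 i ∧ y ∈ T ∧ y ∈ 𝒜 j ∧ z = sbr i j x y}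

/-- The `φ`-submodule spanned by superbrackets of homogeneous elements of `S` and `T`. -/
def superBrSpan (S T : Set A) : Submodule φ A :=
  Submodule.span φ
    {z : A | ∃ (i j : ZMod 2) (x y : A), x ∈ S ∧ x ∈ 𝒜 i ∧ y ∈ T ∧ y ∈ 𝒜 j ∧ z = sbr i j x y}

end

/-- Data exhibiting the prime superalgebra `A` as a central order in a simple superalgebra `B`
that is 4-dimensional over its center. -/
structure CentralOrderIn4DimSimple (φ : Type*) [CommRing φ] {A : Type*} [Ring A] [Algebra φ A]
    (𝒜 : ZMod 2 → Submodule φ A) [GradedAlgebra 𝒜] where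
  B : Type
  [ringB : Ring B]
  [algB : Algebra φ B]
  ℬ : ZMod 2 → Submodule φ B
  [gradedB : GradedAlgebra ℬ]
  ι : A →ₐ[φ] B
  inj : Function.Injective ι
  grading : ∀ (i : ZMod 2), ∀ x ∈ 𝒜 i, ι x ∈ ℬ i
  central_unit : ∀ z ∈ evenCenter 𝒜, z ≠ 0 → IsUnit (ι z)
  localized : ∀ b : B, ∃ z a : A, z ∈ evenCenter 𝒜 ∧ z ≠ 0 ∧ ι z * b = ι a
  sq_ne_zero : ∃ x y : B, x * y ≠ 0
  simple : ∀ J : SuperIdeal ℬ, J.carrier = ⊥ ∨ J.carrier = ⊤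
  dim4 : Module.finrank (Subring.center B) B = 4


/-! ### Auxiliary machinery for the proof of `lie_ideal_abelian_or_dense` -/

section Aux
variable [CommRing φ] [Ring A] [Algebra φ A]

lemma zmod2_cases' (i : ZMod 2) : i = 0 ∨ i = 1 := by revert i; decide

lemma Id1 (i j k : ZMod 2) (x y a : A) :
    sbr (i+j) k (x*y) a = x * sbr j k y a + ssign j k • (sbr i k x a * y) := by
  rcases zmod2_cases' i with hi|hi <;> rcases zmod2_cases' j with hj|hj <;>
    rcases zmod2_cases' k with hk|hk <;> subst hi <;> subst hj <;> subst hk <;>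
    simp [sbr, ssign, show (1+1 : ZMod 2) = 0 by decide] <;> first | noncomm_ring | abel

lemma Id2 (i j k : ZMod 2) (v w a : A) :
    sbr i j v w * a = sbr i (j+k) v (w*a) + ssign i (j+k) • (w * sbr k i a v) := by
  rcases zmod2_cases' i with hi|hi <;> rcases zmod2_cases' j with hj|hj <;>
    rcases zmod2_cases' k with hk|hk <;> subst hi <;> subst hj <;> subst hk <;>
    simp [sbr, ssign, show (1+1 : ZMod 2) = 0 by decide] <;> first | noncomm_ring | abel

lemma Id3 (p k : ZMod 2) (x a : A) : x * a = sbr p k x a + ssign p k • (a * x) := by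
  simp [sbr]

lemma Id4 (i k : ZMod 2) (v a : A) : sbr k i a v = -(ssign i k) • sbr i k v a := by
  rcases zmod2_cases' i with hi|hi <;> rcases zmod2_cases' k with hk|hk <;>
    subst hi <;> subst hk <;> simp [sbr, ssign] <;> first | noncomm_ring | abel

lemma Id5 (i j k : ZMod 2) (v w c : A) :
    sbr (i+j) k (sbr i j v w) c
      = sbr i (j+k) v (sbr j k w c) - ssign i j • sbr j (i+k) w (sbr i k v c) := by
  rcases zmod2_cases' i with hi|hi <;> rcases zmod2_cases' j with hj|hj <;>
    rcases zmod2_cases' k with hk|hk <;> subst hi <;> subst hj <;> subst hk <;>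
    simp [sbr, ssign, show (1+1 : ZMod 2) = 0 by decide] <;> first | noncomm_ring | abel

lemma sbr_zero_left (i j : ZMod 2) (a : A) : sbr i j 0 a = 0 := by simp [sbr]

variable (𝒜 : ZMod 2 → Submodule φ A) [GradedAlgebra 𝒜]

lemma homog_eq_zero {i j : ZMod 2} {x : A} (hi : x ∈ 𝒜 i) (hj : x ∈ 𝒜 j) (h : i ≠ j) :
    x = 0 := by
  have h1 := DirectSum.decompose_of_mem_same 𝒜 hj
  have h2 := DirectSum.decompose_of_mem_ne 𝒜 hi h
  rw [h2] at h1; exact h1.symm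

lemma decompose_two (x : A) :
    ((DirectSum.decompose 𝒜 x 0 : A)) + (DirectSum.decompose 𝒜 x 1 : A) = x := by
  induction x using DirectSum.Decomposition.inductionOn 𝒜 with
  | zero => simp
  | @homogeneous i m =>
    rcases zmod2_cases' i with h|h <;> subst h
    · rw [DirectSum.decompose_of_mem_same 𝒜 m.2,
        DirectSum.decompose_of_mem_ne 𝒜 m.2 (by decide : (0:ZMod 2) ≠ 1), add_zero]
    · rw [DirectSum.decompose_of_mem_same 𝒜 m.2,
        DirectSum.decompose_of_mem_ne 𝒜 m.2 (by decide : (1:ZMod 2) ≠ 0), zero_add]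
  | add m m' hm hm' =>
    rw [DirectSum.decompose_add]
    push_cast [DirectSum.add_apply]
    rw [add_add_add_comm, hm, hm']

lemma sbr_mem_graded {i j : ZMod 2} {x y : A} (hx : x ∈ 𝒜 i) (hy : y ∈ 𝒜 j) :
    sbr i j x y ∈ 𝒜 (i+j) := by
  have h2 : y*x ∈ 𝒜 (i+j) := by rw [add_comm]; exact SetLike.mul_mem_graded hy hx
  exact sub_mem (SetLike.mul_mem_graded hx hy) (zsmul_mem h2 _)

lemma span_graded {G : Set A} (hG : ∀ g ∈ G, ∃ d, g ∈ 𝒜 d) (i : ZMod 2) :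
    ∀ x ∈ Submodule.span φ G, ((DirectSum.decompose 𝒜 x i : A)) ∈ Submodule.span φ G := by
  intro x hx
  induction hx using Submodule.span_induction with
  | mem g hg =>
    obtain ⟨d, hd⟩ := hG g hg
    by_cases h : i = d
    · subst h; rw [DirectSum.decompose_of_mem_same 𝒜 hd]; exact Submodule.subset_span hg
    · rw [DirectSum.decompose_of_mem_ne 𝒜 hd (Ne.symm h)]; exact zero_mem _
  | zero => simp
  | add x y _ _ hx hy =>
    rw [DirectSum.decompose_add]; push_cast [DirectSum.add_apply]; exact add_mem hx hy
  | smul c x _ hx =>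
    rw [DirectSum.decompose_smul]; push_cast [DirectSum.smul_apply]
    exact Submodule.smul_mem _ _ hx

/-- A `SuperIdeal` from a homogeneous generating set closed under homogeneous
left/right multiplications. -/
def mkSuperIdeal (G : Set A)
    (hhom : ∀ g ∈ G, ∃ d, g ∈ 𝒜 d)
    (hl : ∀ (k : ZMod 2) (c : A), c ∈ 𝒜 k → ∀ g ∈ G, c * g ∈ Submodule.span φ G)
    (hr : ∀ (k : ZMod 2) (c : A), c ∈ 𝒜 k → ∀ g ∈ G, g * c ∈ Submodule.span φ G) :
    SuperIdeal 𝒜 where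
  carrier := Submodule.span φ G
  mul_mem_left := by
    intro c x hx
    induction hx using Submodule.span_induction with
    | mem g hg =>
      have h2 : c * g = (DirectSum.decompose 𝒜 c 0 : A) * g
          + (DirectSum.decompose 𝒜 c 1 : A) * g := by
        rw [← add_mul, decompose_two]
      rw [h2]
      exact add_mem (hl 0 _ (DirectSum.decompose 𝒜 c 0).2 g hg)
        (hl 1 _ (DirectSum.decompose 𝒜 c 1).2 g hg)
    | zero => rw [mul_zero]; exact zero_mem _
    | add x y _ _ h1 h2 => rw [mul_add]; exact add_mem h1 h2
    | smul r x _ h1 => rw [mul_smul_comm]; exact Submodule.smul_mem _ _ h1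
  mul_mem_right := by
    intro c x hx
    induction hx using Submodule.span_induction with
    | mem g hg =>
      have h2 : g * c = g * (DirectSum.decompose 𝒜 c 0 : A)
          + g * (DirectSum.decompose 𝒜 c 1 : A) := by
        rw [← mul_add, decompose_two]
      rw [h2]
      exact add_mem (hr 0 _ (DirectSum.decompose 𝒜 c 0).2 g hg)
        (hr 1 _ (DirectSum.decompose 𝒜 c 1).2 g hg)
    | zero => rw [zero_mul]; exact zero_mem _
    | add x y _ _ h1 h2 => rw [add_mul]; exact add_mem h1 h2
    | smul r x _ h1 => rw [smul_mul_assoc]; exact Submodule.smul_mem _ _ h1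
  graded' := fun i x hx => span_graded 𝒜 (fun g hg => hhom g hg) i x hx

variable {𝒜}
variable (L : Submodule φ A)

/-- homogeneous elements of `L` -/
def Lh : Set A := {x : A | x ∈ L ∧ ∃ d, x ∈ 𝒜 d}

/-- the span of monomials in homogeneous elements of `L` -/
def Vs : Submodule φ A := Submodule.span φ (Subsemigroup.closure (Lh (𝒜 := 𝒜) L) : Set A)

lemma Vs_mul : ∀ x ∈ Vs (𝒜 := 𝒜) L, ∀ y ∈ Vs (𝒜 := 𝒜) L, x * y ∈ Vs (𝒜 := 𝒜) L := by
  intro x hx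
  induction hx using Submodule.span_induction with
  | mem g hg =>
    intro y hy
    induction hy using Submodule.span_induction with
    | mem h hh => exact Submodule.subset_span (Subsemigroup.mul_mem _ hg hh)
    | zero => simp
    | add y z _ _ h1 h2 => rw [mul_add]; exact add_mem h1 h2
    | smul c y _ h1 => rw [mul_smul_comm]; exact Submodule.smul_mem _ _ h1
  | zero => simp
  | add x y _ _ h1 h2 => intro z hz; rw [add_mul]; exact add_mem (h1 z hz) (h2 z hz)
  | smul c x _ h1 => intro z hz; rw [smul_mul_assoc]; exact Submodule.smul_mem _ _ (h1 z hz)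

lemma Sh_hom : ∀ v ∈ Subsemigroup.closure (Lh (𝒜 := 𝒜) L), ∃ e, v ∈ 𝒜 e := by
  intro v hv
  induction hv using Subsemigroup.closure_induction with
  | mem x hx => exact hx.2
  | mul x y _ _ hx hy =>
    obtain ⟨e1, h1⟩ := hx; obtain ⟨e2, h2⟩ := hy
    exact ⟨e1 + e2, SetLike.mul_mem_graded h1 h2⟩

variable (hLie : ∀ (i j : ZMod 2), ∀ x ∈ L, x ∈ 𝒜 i → ∀ a ∈ 𝒜 j, sbr i j x a ∈ L)

include hLie in
lemma lieS : ∀ v ∈ Subsemigroup.closure (Lh (𝒜 := 𝒜) L),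
    ∀ d, v ∈ 𝒜 d → ∀ (k : ZMod 2) (a : A), a ∈ 𝒜 k → sbr d k v a ∈ Vs (𝒜 := 𝒜) L := by
  intro v hv
  induction hv using Subsemigroup.closure_induction with
  | mem x hx =>
    intro d hd k a ha
    obtain ⟨hxL, i, hxi⟩ := hx
    by_cases h : x = 0
    · subst h; rw [sbr_zero_left]; exact zero_mem _
    · have hid : i = d := by
        by_contra hne; exact h (homog_eq_zero 𝒜 hxi hd hne)
      subst hid
      have h1 : sbr i k x a ∈ L := hLie i k x hxL hxi a ha
      have h2 : sbr i k x a ∈ 𝒜 (i + k) := sbr_mem_graded 𝒜 hxi ha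
      exact Submodule.subset_span (Subsemigroup.subset_closure ⟨h1, _, h2⟩)
  | mul x y hxm hym hx hy =>
    intro d hd k a ha
    obtain ⟨e1, h1⟩ := Sh_hom L x hxm
    obtain ⟨e2, h2⟩ := Sh_hom L y hym
    by_cases h : x * y = 0
    · rw [h, sbr_zero_left]; exact zero_mem _
    · have hd' : e1 + e2 = d := by
        by_contra hne; exact h (homog_eq_zero 𝒜 (SetLike.mul_mem_graded h1 h2) hd hne)
      subst hd'
      rw [Id1]
      refine add_mem (Vs_mul L x (Submodule.subset_span hxm) _ (hy e2 h2 k a ha)) ?_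
      exact zsmul_mem (Vs_mul L _ (hx e1 h1 k a ha) y (Submodule.subset_span hym)) _

/-- twist operator -/
def tw (k : ZMod 2) (v : A) : A :=
  (DirectSum.decompose 𝒜 v 0 : A) + ssign 1 k • (DirectSum.decompose 𝒜 v 1 : A)

lemma tw_add (k : ZMod 2) (x y : A) :
    tw (𝒜 := 𝒜) k (x + y) = tw (𝒜 := 𝒜) k x + tw (𝒜 := 𝒜) k y := by
  unfold tw
  rw [DirectSum.decompose_add]
  push_cast [DirectSum.add_apply]
  rw [smul_add]; abel

lemma tw_smul (k : ZMod 2) (c : φ) (x : A) :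
    tw (𝒜 := 𝒜) k (c • x) = c • tw (𝒜 := 𝒜) k x := by
  unfold tw
  rw [DirectSum.decompose_smul]
  push_cast [DirectSum.smul_apply]
  rw [smul_add, smul_comm c]

lemma tw_homog {i k : ZMod 2} {v : A} (hv : v ∈ 𝒜 i) : tw (𝒜 := 𝒜) k v = ssign i k • v := by
  rcases zmod2_cases' i with h|h <;> subst h <;> unfold tw
  · rw [DirectSum.decompose_of_mem_same 𝒜 hv,
      DirectSum.decompose_of_mem_ne 𝒜 hv (by decide : (0:ZMod 2) ≠ 1)]
    simp [ssign]
  · rw [DirectSum.decompose_of_mem_same 𝒜 hv,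
      DirectSum.decompose_of_mem_ne 𝒜 hv (by decide : (1:ZMod 2) ≠ 0)]
    simp

include hLie in
lemma lieVs : ∀ v ∈ Vs (𝒜 := 𝒜) L, ∀ i, v ∈ 𝒜 i → ∀ (k : ZMod 2) (a : A), a ∈ 𝒜 k →
    sbr i k v a ∈ Vs (𝒜 := 𝒜) L := by
  have key : ∀ v ∈ Vs (𝒜 := 𝒜) L, ∀ (k : ZMod 2) (a : A), a ∈ 𝒜 k →
      v * a - a * tw (𝒜 := 𝒜) k v ∈ Vs (𝒜 := 𝒜) L := by
    intro v hv
    induction hv using Submodule.span_induction with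
    | mem g hg =>
      intro k a ha
      obtain ⟨e, he⟩ := Sh_hom L g hg
      rw [tw_homog he, mul_smul_comm]
      exact lieS L hLie g hg e he k a ha
    | zero => intro k a ha; simp [tw]
    | add x y _ _ h1 h2 =>
      intro k a ha
      have : (x + y) * a - a * tw (𝒜 := 𝒜) k (x + y)
          = (x * a - a * tw (𝒜 := 𝒜) k x) + (y * a - a * tw (𝒜 := 𝒜) k y) := by
        rw [tw_add]; noncomm_ring
      rw [this]; exact add_mem (h1 k a ha) (h2 k a ha)
    | smul c x _ h1 =>
      intro k a ha
      have : (c • x) * a - a * tw (𝒜 := 𝒜) k (c • x)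
          = c • (x * a - a * tw (𝒜 := 𝒜) k x) := by
        rw [tw_smul, smul_sub, smul_mul_assoc, mul_smul_comm]
      rw [this]; exact Submodule.smul_mem _ _ (h1 k a ha)
  intro v hv i hvi k a ha
  have := key v hv k a ha
  rwa [tw_homog hvi, mul_smul_comm,
    show v * a - ssign i k • (a * v) = sbr i k v a from rfl] at this

include hLie in
lemma sbr_mem_Vs {i j : ZMod 2} {v w : A} (hv : v ∈ Vs (𝒜 := 𝒜) L) (hw : w ∈ Vs (𝒜 := 𝒜) L) :
    sbr i j v w ∈ Vs (𝒜 := 𝒜) L :=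
  sub_mem (Vs_mul L v hv w hw) (zsmul_mem (Vs_mul L w hw v hv) _)

include hLie in
lemma sbr_mul_mem (i j k : ZMod 2) (v w a : A) (hv : v ∈ Vs (𝒜 := 𝒜) L) (hvi : v ∈ 𝒜 i)
    (hw : w ∈ Vs (𝒜 := 𝒜) L) (hwj : w ∈ 𝒜 j) (ha : a ∈ 𝒜 k) :
    sbr i j v w * a ∈ Vs (𝒜 := 𝒜) L := by
  rw [Id2 i j k]
  refine add_mem (lieVs L hLie v hv i hvi (j+k) _ (SetLike.mul_mem_graded hwj ha))
    (zsmul_mem ?_ _)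
  rw [Id4, mul_smul_comm]
  exact zsmul_mem (Vs_mul L w hw _ (lieVs L hLie v hv i hvi k a ha)) _

include hLie in
lemma mul_sbr_mem (i j k : ZMod 2) (v w a : A) (hv : v ∈ Vs (𝒜 := 𝒜) L) (hvi : v ∈ 𝒜 i)
    (hw : w ∈ Vs (𝒜 := 𝒜) L) (hwj : w ∈ 𝒜 j) (ha : a ∈ 𝒜 k) :
    a * sbr i j v w ∈ Vs (𝒜 := 𝒜) L := by
  rw [Id3 k (i+j) a (sbr i j v w), Id4]
  exact add_mem
    (zsmul_mem (lieVs L hLie _ (sbr_mem_Vs L hLie hv hw) (i+j)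
      (sbr_mem_graded 𝒜 hvi hwj) k a ha) _)
    (zsmul_mem (sbr_mul_mem L hLie i j k v w a hv hvi hw hwj ha) _)

/-- Generators of the ideal generated by `[Vs,Vs]` (homogeneous pieces). -/
def GI : Set A := {z : A | ∃ (k i j l : ZMod 2) (a v w b : A),
  a ∈ 𝒜 k ∧ v ∈ Vs (𝒜 := 𝒜) L ∧ v ∈ 𝒜 i ∧ w ∈ Vs (𝒜 := 𝒜) L ∧ w ∈ 𝒜 j ∧ b ∈ 𝒜 l ∧
  z = a * (sbr i j v w * b)}

/-- Generators of the ideal generated by `[Vs,Vs]⬝[Vs,Vs]` (homogeneous pieces). -/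
def GJ : Set A := {z : A | ∃ (k i j i' j' l : ZMod 2) (a v w v' w' b : A),
  a ∈ 𝒜 k ∧ v ∈ Vs (𝒜 := 𝒜) L ∧ v ∈ 𝒜 i ∧ w ∈ Vs (𝒜 := 𝒜) L ∧ w ∈ 𝒜 j ∧
  v' ∈ Vs (𝒜 := 𝒜) L ∧ v' ∈ 𝒜 i' ∧ w' ∈ Vs (𝒜 := 𝒜) L ∧ w' ∈ 𝒜 j' ∧ b ∈ 𝒜 l ∧
  z = a * (sbr i j v w * (sbr i' j' v' w' * b))}

lemma GI_hom : ∀ g ∈ GI (𝒜 := 𝒜) L, ∃ d, g ∈ 𝒜 d := by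
  rintro g ⟨k, i, j, l, a, v, w, b, ha, hv, hvi, hw, hwj, hb, rfl⟩
  exact ⟨_, SetLike.mul_mem_graded ha
    (SetLike.mul_mem_graded (sbr_mem_graded 𝒜 hvi hwj) hb)⟩

lemma GJ_hom : ∀ g ∈ GJ (𝒜 := 𝒜) L, ∃ d, g ∈ 𝒜 d := by
  rintro g ⟨k, i, j, i', j', l, a, v, w, v', w', b, ha, hv, hvi, hw, hwj, hv', hvi', hw', hwj',
    hb, rfl⟩
  exact ⟨_, SetLike.mul_mem_graded ha (SetLike.mul_mem_graded (sbr_mem_graded 𝒜 hvi hwj)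
    (SetLike.mul_mem_graded (sbr_mem_graded 𝒜 hvi' hwj') hb))⟩

lemma GI_left : ∀ (m : ZMod 2) (c : A), c ∈ 𝒜 m → ∀ g ∈ GI (𝒜 := 𝒜) L,
    c * g ∈ Submodule.span φ (GI (𝒜 := 𝒜) L) := by
  rintro m c hc g ⟨k, i, j, l, a, v, w, b, ha, hv, hvi, hw, hwj, hb, rfl⟩
  refine Submodule.subset_span ⟨m + k, i, j, l, c * a, v, w, b,
    SetLike.mul_mem_graded hc ha, hv, hvi, hw, hwj, hb, ?_⟩
  rw [mul_assoc]

lemma GI_right : ∀ (m : ZMod 2) (c : A), c ∈ 𝒜 m → ∀ g ∈ GI (𝒜 := 𝒜) L,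
    g * c ∈ Submodule.span φ (GI (𝒜 := 𝒜) L) := by
  rintro m c hc g ⟨k, i, j, l, a, v, w, b, ha, hv, hvi, hw, hwj, hb, rfl⟩
  refine Submodule.subset_span ⟨k, i, j, l + m, a, v, w, b * c,
    ha, hv, hvi, hw, hwj, SetLike.mul_mem_graded hb hc, ?_⟩
  simp [mul_assoc]

lemma GJ_left : ∀ (m : ZMod 2) (c : A), c ∈ 𝒜 m → ∀ g ∈ GJ (𝒜 := 𝒜) L,
    c * g ∈ Submodule.span φ (GJ (𝒜 := 𝒜) L) := by
  rintro m c hc g ⟨k, i, j, i', j', l, a, v, w, v', w', b, ha, hv, hvi, hw, hwj, hv', hvi',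
    hw', hwj', hb, rfl⟩
  refine Submodule.subset_span ⟨m + k, i, j, i', j', l, c * a, v, w, v', w', b,
    SetLike.mul_mem_graded hc ha, hv, hvi, hw, hwj, hv', hvi', hw', hwj', hb, ?_⟩
  rw [mul_assoc]

lemma GJ_right : ∀ (m : ZMod 2) (c : A), c ∈ 𝒜 m → ∀ g ∈ GJ (𝒜 := 𝒜) L,
    g * c ∈ Submodule.span φ (GJ (𝒜 := 𝒜) L) := by
  rintro m c hc g ⟨k, i, j, i', j', l, a, v, w, v', w', b, ha, hv, hvi, hw, hwj, hv', hvi',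
    hw', hwj', hb, rfl⟩
  refine Submodule.subset_span ⟨k, i, j, i', j', l + m, a, v, w, v', w', b * c,
    ha, hv, hvi, hw, hwj, hv', hvi', hw', hwj', SetLike.mul_mem_graded hb hc, ?_⟩
  simp [mul_assoc]

include hLie in
lemma GJ_sub_Vs : ∀ g ∈ GJ (𝒜 := 𝒜) L, g ∈ Vs (𝒜 := 𝒜) L := by
  rintro g ⟨k, i, j, i', j', l, a, v, w, v', w', b, ha, hv, hvi, hw, hwj, hv', hvi',
    hw', hwj', hb, rfl⟩
  have h1 : a * sbr i j v w ∈ Vs (𝒜 := 𝒜) L := mul_sbr_mem L hLie i j k v w a hv hvi hw hwj ha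
  have h2 : sbr i' j' v' w' * b ∈ Vs (𝒜 := 𝒜) L :=
    sbr_mul_mem L hLie i' j' l v' w' b hv' hvi' hw' hwj' hb
  have h3 : a * (sbr i j v w * (sbr i' j' v' w' * b))
      = (a * sbr i j v w) * (sbr i' j' v' w' * b) := by rw [mul_assoc]
  rw [h3]
  exact Vs_mul L _ h1 _ h2

lemma Vs_sub_adjoin : (Vs (𝒜 := 𝒜) L : Set A) ⊆ (NonUnitalAlgebra.adjoin φ (L : Set A)) := by
  intro x hx
  have key : ∀ y ∈ Subsemigroup.closure (Lh (𝒜 := 𝒜) L),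
      y ∈ NonUnitalAlgebra.adjoin φ (L : Set A) := by
    intro y hy
    induction hy using Subsemigroup.closure_induction with
    | mem z hz => exact NonUnitalAlgebra.subset_adjoin φ hz.1
    | mul z z' _ _ h1 h2 => exact mul_mem h1 h2
  have hle : Vs (𝒜 := 𝒜) L ≤ (NonUnitalAlgebra.adjoin φ (L : Set A)).toSubmodule :=
    Submodule.span_le.mpr fun y hy => key y hy
  exact hle hx

end Aux

/-- **(Gómez-Ambrosi–Laliena–Shestakov, Corollary 2.)** Let `A` be a semiprime superalgebra
over a commutative ring `φ` with `½ ∈ φ` and let `L` be a Lie ideal of `A` (a graded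
`φ`-submodule with `[L,A] ⊆ L`). Then either `[L,L] = 0` or `L` is dense in `A`. -/
theorem lie_ideal_abelian_or_dense
    {φ A : Type*} [CommRing φ] [Invertible (2 : φ)] [Ring A] [Algebra φ A]
    (𝒜 : ZMod 2 → Submodule φ A) [GradedAlgebra 𝒜]
    (hsemi : SuperSemiprime 𝒜)
    (L : Submodule φ A)
    (hLgr : ∀ (i : ZMod 2), ∀ x ∈ L, ((DirectSum.decompose 𝒜 x) i : A) ∈ L)
    (hLie : ∀ (i j : ZMod 2), ∀ x ∈ L, x ∈ 𝒜 i → ∀ a ∈ 𝒜 j, sbr i j x a ∈ L) :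
    (∀ (i j : ZMod 2), ∀ x ∈ L, x ∈ 𝒜 i → ∀ y ∈ L, y ∈ 𝒜 j → sbr i j x y = 0) ∨
    IsDenseIn 𝒜 (L : Set A) := by
  classical
  by_cases hbot : Submodule.span φ (GJ (𝒜 := 𝒜) L) = ⊥
  · left
    have dagger : ∀ (i j i' j' : ZMod 2) (v w v' w' : A), v ∈ Vs (𝒜 := 𝒜) L → v ∈ 𝒜 i →
        w ∈ Vs (𝒜 := 𝒜) L → w ∈ 𝒜 j → v' ∈ Vs (𝒜 := 𝒜) L → v' ∈ 𝒜 i' →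
        w' ∈ Vs (𝒜 := 𝒜) L → w' ∈ 𝒜 j' →
        sbr i j v w * sbr i' j' v' w' = 0 := by
      intro i j i' j' v w v' w' hv hvi hw hwj hv' hvi' hw' hwj'
      have hmem : (1:A) * (sbr i j v w * (sbr i' j' v' w' * 1))
          ∈ Submodule.span φ (GJ (𝒜 := 𝒜) L) :=
        Submodule.subset_span ⟨0, i, j, i', j', 0, 1, v, w, v', w', 1,
          SetLike.one_mem_graded 𝒜, hv, hvi, hw, hwj, hv', hvi', hw', hwj',
          SetLike.one_mem_graded 𝒜, rfl⟩
      rw [hbot, Submodule.mem_bot] at hmem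
      simpa using hmem
    have hss : ∀ (i j i' j' m : ZMod 2) (v w v' w' c : A), v ∈ Vs (𝒜 := 𝒜) L → v ∈ 𝒜 i →
        w ∈ Vs (𝒜 := 𝒜) L → w ∈ 𝒜 j → v' ∈ Vs (𝒜 := 𝒜) L → v' ∈ 𝒜 i' →
        w' ∈ Vs (𝒜 := 𝒜) L → w' ∈ 𝒜 j' → c ∈ 𝒜 m →
        sbr i j v w * c * sbr i' j' v' w' = 0 := by
      intro i j i' j' m v w v' w' c hv hvi hw hwj hv' hvi' hw' hwj' hc
      rw [Id3 (i+j) m (sbr i j v w) c, add_mul, smul_mul_assoc, mul_assoc c,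
        dagger i j i' j' v w v' w' hv hvi hw hwj hv' hvi' hw' hwj', mul_zero, smul_zero,
        add_zero, Id5 i j m, sub_mul, smul_mul_assoc,
        dagger i (j+m) i' j' v (sbr j m w c) v' w' hv hvi
          (lieVs L hLie w hw j hwj m c hc) (sbr_mem_graded 𝒜 hwj hc) hv' hvi' hw' hwj',
        dagger j (i+m) i' j' w (sbr i m v c) v' w' hw hwj
          (lieVs L hLie v hv i hvi m c hc) (sbr_mem_graded 𝒜 hvi hc) hv' hvi' hw' hwj']
      simp
    have hss' : ∀ (i j i' j' : ZMod 2) (v w v' w' c : A), v ∈ Vs (𝒜 := 𝒜) L → v ∈ 𝒜 i →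
        w ∈ Vs (𝒜 := 𝒜) L → w ∈ 𝒜 j → v' ∈ Vs (𝒜 := 𝒜) L → v' ∈ 𝒜 i' →
        w' ∈ Vs (𝒜 := 𝒜) L → w' ∈ 𝒜 j' →
        sbr i j v w * c * sbr i' j' v' w' = 0 := by
      intro i j i' j' v w v' w' c hv hvi hw hwj hv' hvi' hw' hwj'
      have hd : c = (DirectSum.decompose 𝒜 c 0 : A) + (DirectSum.decompose 𝒜 c 1 : A) :=
        (decompose_two 𝒜 c).symm
      rw [hd, mul_add, add_mul,
        hss i j i' j' 0 v w v' w' _ hv hvi hw hwj hv' hvi' hw' hwj'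
          (DirectSum.decompose 𝒜 c 0).2,
        hss i j i' j' 1 v w v' w' _ hv hvi hw hwj hv' hvi' hw' hwj'
          (DirectSum.decompose 𝒜 c 1).2, add_zero]
    have hII : ∀ x ∈ Submodule.span φ (GI (𝒜 := 𝒜) L),
        ∀ y ∈ Submodule.span φ (GI (𝒜 := 𝒜) L), x * y = 0 := by
      intro x hx
      induction hx using Submodule.span_induction with
      | mem g hg =>
        intro y hy
        induction hy using Submodule.span_induction with
        | mem g' hg' =>
          obtain ⟨k, i, j, l, a, v, w, b, ha, hv, hvi, hw, hwj, hb, rfl⟩ := hg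
          obtain ⟨k', i', j', l', a', v', w', b', ha', hv', hvi', hw', hwj', hb', rfl⟩ := hg'
          have e : (a * (sbr i j v w * b)) * (a' * (sbr i' j' v' w' * b'))
              = a * ((sbr i j v w * (b * a') * sbr i' j' v' w') * b') := by
            simp only [mul_assoc]
          rw [e, hss' i j i' j' v w v' w' (b * a') hv hvi hw hwj hv' hvi' hw' hwj']
          simp
        | zero => exact mul_zero _
        | add y z _ _ h1 h2 => rw [mul_add, h1, h2, add_zero]
        | smul c y _ h1 => rw [mul_smul_comm, h1, smul_zero]
      | zero => intro y hy; exact zero_mul y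
      | add x1 x2 _ _ h1 h2 => intro y hy; rw [add_mul, h1 y hy, h2 y hy, add_zero]
      | smul c x _ h1 => intro y hy; rw [smul_mul_assoc, h1 y hy, smul_zero]
    have hIbot : (mkSuperIdeal 𝒜 (GI (𝒜 := 𝒜) L) (GI_hom L) (GI_left L)
        (GI_right L)).carrier = ⊥ := hsemi _ hII
    intro i j x hx hxi y hy hyj
    have hxV : x ∈ Vs (𝒜 := 𝒜) L :=
      Submodule.subset_span (Subsemigroup.subset_closure ⟨hx, i, hxi⟩)
    have hyV : y ∈ Vs (𝒜 := 𝒜) L :=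
      Submodule.subset_span (Subsemigroup.subset_closure ⟨hy, j, hyj⟩)
    have hmem : (1:A) * (sbr i j x y * 1) ∈ Submodule.span φ (GI (𝒜 := 𝒜) L) :=
      Submodule.subset_span ⟨0, i, j, 0, 1, x, y, 1, SetLike.one_mem_graded 𝒜,
        hxV, hxi, hyV, hyj, SetLike.one_mem_graded 𝒜, rfl⟩
    have : Submodule.span φ (GI (𝒜 := 𝒜) L) = ⊥ := hIbot
    rw [this, Submodule.mem_bot] at hmem
    simpa using hmem
  · right
    refine ⟨mkSuperIdeal 𝒜 (GJ (𝒜 := 𝒜) L) (GJ_hom L) (GJ_left L) (GJ_right L), hbot, ?_⟩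
    intro x hx
    exact Vs_sub_adjoin L
      (Submodule.span_le.mpr (fun g hg => GJ_sub_Vs L hLie g hg) hx)
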